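/- Let L be a commutative lattice of orthogonal projections on H containing 0 and I, let A be an atom of L, let x be a nonzero vector in the range of A, and let y be a vector in the range of E(A), the smallest projection of L dominating A. Then the rank-one operator T = ‖x‖⁻² (y ⊗ x*) (sending z to ⟨z,x⟩‖x‖⁻² y) satisfies: T leaves every projection in L invariant, Tx = y, and TA = T. -/

import Mathlib

noncomputable section

open scoped InnerProductSpace

variable {H : Type*} [NormedAddCommGroup H] [InnerProductSpace ℂ H] [CompleteSpace H]

/-- `P` is an orthogonal projection on `H`. -/
def IsOrthProj (P : H →L[ℂ] H) : Prop := IsSelfAdjoint P ∧ P ∘L P = P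

/-- The usual order on orthogonal projections: `P ≤ Q` iff `Q P = P` (range containment). -/
def pLE (P Q : H →L[ℂ] H) : Prop := Q ∘L P = P

/-- An atom of the lattice `L`: a nonzero interval projection `E - F` (`E, F ∈ L`, `F ≤ E`)
containing no interval projection other than `0` and itself. -/
def IsAtomOf (L : Set (H →L[ℂ] H)) (A : H →L[ℂ] H) : Prop :=
  A ≠ 0 ∧ (∃ E ∈ L, ∃ F ∈ L, pLE F E ∧ A = E - F) ∧
    ∀ E ∈ L, ∀ F ∈ L, pLE F E → pLE (E - F) A → E - F = 0 ∨ E - F = A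

/-- `L` is a commutative subspace lattice (CSL): a strongly closed complete lattice of
mutually commuting orthogonal projections containing `0` and `I`.  Completeness is expressed
by the existence, for every subset, of a member of `L` realizing the honest infimum
(intersection of ranges) and the honest supremum (closed span of ranges). -/
def IsCSL (L : Set (H →L[ℂ] H)) : Prop :=
  (∀ P ∈ L, IsOrthProj P) ∧
  (∀ P ∈ L, ∀ Q ∈ L, P ∘L Q = Q ∘L P) ∧
  (0 : H →L[ℂ] H) ∈ L ∧ (1 : H →L[ℂ] H) ∈ L ∧
  (∀ S ⊆ L, ∃ P ∈ L, (∀ Q ∈ S, pLE P Q) ∧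
      LinearMap.range (P : H →ₗ[ℂ] H) = ⨅ Q ∈ S, LinearMap.range (Q : H →ₗ[ℂ] H)) ∧
  (∀ S ⊆ L, ∃ P ∈ L, (∀ Q ∈ S, pLE Q P) ∧
      LinearMap.range (P : H →ₗ[ℂ] H) = (⨆ Q ∈ S, LinearMap.range (Q : H →ₗ[ℂ] H)).topologicalClosure)

/-- `Alg L`: the algebra of operators leaving every projection of `L` invariant. -/
def AlgL (L : Set (H →L[ℂ] H)) : Set (H →L[ℂ] H) :=
  {T | ∀ P ∈ L, (1 - P) ∘L (T ∘L P) = 0}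

/-- The (not necessarily closed) orbit `{Alg L · x}` of a vector `x`. -/
def orbit (L : Set (H →L[ℂ] H)) (x : H) : Set H :=
  {y | ∃ T ∈ AlgL L, T x = y}

/-- `P` is hyperatomic in `L`: `P = E(A₁, …, Aₖ)`, the smallest projection of `L`
dominating finitely many atoms `A₁, …, Aₖ` of `L`. -/
def HyperatomicIn (L : Set (H →L[ℂ] H)) (P : H →L[ℂ] H) : Prop :=
  ∃ (k : ℕ) (A : Fin k → H →L[ℂ] H), (∀ j, IsAtomOf L (A j)) ∧
    (∀ j, pLE (A j) P) ∧ ∀ F ∈ L, (∀ j, pLE (A j) F) → pLE P F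

set_option linter.unusedSectionVars false
set_option linter.unusedVariables false


lemma fix_of_mem_range {P : H →L[ℂ] H} (hP : P ∘L P = P) {v : H}
    (hv : v ∈ LinearMap.range (P : H →ₗ[ℂ] H)) : P v = v := by
  obtain ⟨w, rfl⟩ := hv
  have := congrArg (fun f : H →L[ℂ] H => f w) hP
  simpa using this

lemma orthproj_ext {P Q : H →L[ℂ] H} (hP : IsSelfAdjoint P) (hP2 : P ∘L P = P)
    (hQ : IsSelfAdjoint Q) (hQ2 : Q ∘L Q = Q)
    (h : LinearMap.range (P : H →ₗ[ℂ] H) = LinearMap.range (Q : H →ₗ[ℂ] H)) : P = Q := by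
  have hPQ : P ∘L Q = Q := by
    ext v; exact fix_of_mem_range hP2 (h ▸ LinearMap.mem_range_self _ v)
  have hQP : Q ∘L P = P := by
    ext v; exact fix_of_mem_range hQ2 (h.symm ▸ LinearMap.mem_range_self _ v)
  calc P = star P := hP.symm
    _ = star (Q * P) := by rw [show Q * P = P from hQP]
    _ = star P * star Q := star_mul Q P
    _ = P * Q := by rw [hP, hQ]
    _ = Q := hPQ

lemma meet_mem {L : Set (H →L[ℂ] H)} (hL : IsCSL L) {P Q : H →L[ℂ] H}
    (hP : P ∈ L) (hQ : Q ∈ L) : P ∘L Q ∈ L := by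
  obtain ⟨hproj, hcomm, -, -, hinf, -⟩ := hL
  obtain ⟨hPs, hP2⟩ := hproj P hP
  obtain ⟨hQs, hQ2⟩ := hproj Q hQ
  have hc : P ∘L Q = Q ∘L P := hcomm P hP Q hQ
  obtain ⟨M, hML, -, hMr⟩ := hinf {P, Q} (by
    intro R hR; rcases hR with rfl | rfl; exacts [hP, hQ])
  have hMr' : LinearMap.range (M : H →ₗ[ℂ] H) = LinearMap.range (P : H →ₗ[ℂ] H) ⊓ LinearMap.range (Q : H →ₗ[ℂ] H) := by
    rw [hMr, iInf_pair]
  have hrange : LinearMap.range ((P ∘L Q : H →L[ℂ] H) : H →ₗ[ℂ] H) = LinearMap.range (P : H →ₗ[ℂ] H) ⊓ LinearMap.range (Q : H →ₗ[ℂ] H) := by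
    apply le_antisymm
    · rintro v ⟨w, rfl⟩
      refine ⟨⟨Q w, rfl⟩, ?_⟩
      have : (P ∘L Q) w = (Q ∘L P) w := by rw [hc]
      exact this ▸ ⟨P w, rfl⟩
    · rintro v ⟨hv1, hv2⟩
      refine ⟨v, ?_⟩
      simp only [ContinuousLinearMap.coe_coe, ContinuousLinearMap.comp_apply,
        fix_of_mem_range hQ2 hv2, fix_of_mem_range hP2 hv1]
  have hPQs : IsSelfAdjoint (P ∘L Q) := by
    have : star (P * Q) = P * Q := by
      rw [star_mul, hPs, hQs]; exact hc.symm
    exact this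
  have hPQ2 : (P ∘L Q) ∘L (P ∘L Q) = P ∘L Q := by
    calc (P ∘L Q) ∘L (P ∘L Q) = P ∘L ((Q ∘L P) ∘L Q) := by
          simp [ContinuousLinearMap.comp_assoc]
      _ = P ∘L ((P ∘L Q) ∘L Q) := by rw [hc]
      _ = (P ∘L P) ∘L (Q ∘L Q) := by simp [ContinuousLinearMap.comp_assoc]
      _ = P ∘L Q := by rw [hP2, hQ2]
  obtain ⟨hMs, hM2⟩ := hproj M hML
  have := orthproj_ext hPQs hPQ2 hMs hM2 (hrange.trans hMr'.symm)
  exact this ▸ hML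


/-- the rank-one lemma.  For an atom `A` of a CSL `L`, a nonzero `x` in the
range of `A` and `y` in the range of `E(A)` (the smallest projection of `L` dominating `A`),
the rank-one operator `T = ‖x‖⁻² (y ⊗ x*)` lies in `Alg L`, `T x = y` and `T A = T`. -/
theorem stmt6 (L : Set (H →L[ℂ] H)) (hL : IsCSL L)
    (A : H →L[ℂ] H) (hA : IsAtomOf L A)
    (x : H) (hx : A x = x) (hx0 : x ≠ 0)
    (E : H →L[ℂ] H) (hEL : E ∈ L) (hAE : pLE A E)
    (hEmin : ∀ F ∈ L, pLE A F → pLE E F)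
    (y : H) (hy : E y = y) :
    ∀ T : H →L[ℂ] H, T = (((‖x‖ : ℂ) ^ 2)⁻¹) • ((innerSL ℂ x).smulRight y) →
      (∀ P ∈ L, (1 - P) ∘L (T ∘L P) = 0) ∧ T x = y ∧ T ∘L A = T := by
  intro T hT
  obtain ⟨hproj, hcomm, h0L, h1L, hinf, hsup⟩ := hL
  obtain ⟨hAne, ⟨E₀, hE₀L, F₀, hF₀L, hF₀E₀, hAdef⟩, hAtom⟩ := hA
  obtain ⟨hE₀s, hE₀2⟩ := hproj E₀ hE₀L
  obtain ⟨hF₀s, hF₀2⟩ := hproj F₀ hF₀L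
  have hcEF : E₀ ∘L F₀ = F₀ ∘L E₀ := hcomm E₀ hE₀L F₀ hF₀L
  -- A is self-adjoint and idempotent
  have hAs : IsSelfAdjoint A := by
    rw [hAdef]; exact hE₀s.sub hF₀s
  have hF₀E₀' : F₀ ∘L E₀ = F₀ := hcEF ▸ hF₀E₀
  have hA2 : A ∘L A = A := by
    rw [hAdef]
    show (E₀ - F₀) * (E₀ - F₀) = E₀ - F₀
    have e1 : E₀ * E₀ = E₀ := hE₀2
    have e2 : F₀ * F₀ = F₀ := hF₀2
    have e3 : E₀ * F₀ = F₀ := hF₀E₀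
    have e4 : F₀ * E₀ = F₀ := hF₀E₀'
    rw [mul_sub, sub_mul, sub_mul, e1, e2, e3, e4]
    abel
  -- dichotomy
  have dich : ∀ P ∈ L, P ∘L A = 0 ∨ P ∘L A = A := by
    intro P hPL
    obtain ⟨hPs, hP2⟩ := hproj P hPL
    have hE' : P ∘L E₀ ∈ L := meet_mem ⟨hproj, hcomm, h0L, h1L, hinf, hsup⟩ hPL hE₀L
    have hF' : P ∘L F₀ ∈ L := meet_mem ⟨hproj, hcomm, h0L, h1L, hinf, hsup⟩ hPL hF₀L
    have hcPE : P ∘L E₀ = E₀ ∘L P := hcomm P hPL E₀ hE₀L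
    have hcPF : P ∘L F₀ = F₀ ∘L P := hcomm P hPL F₀ hF₀L
    have hle : pLE (P ∘L F₀) (P ∘L E₀) := by
      show (P ∘L E₀) ∘L (P ∘L F₀) = P ∘L F₀
      calc (P ∘L E₀) ∘L (P ∘L F₀) = P ∘L ((E₀ ∘L P) ∘L F₀) := by
            simp [ContinuousLinearMap.comp_assoc]
        _ = P ∘L ((P ∘L E₀) ∘L F₀) := by rw [← hcPE]
        _ = (P ∘L P) ∘L (E₀ ∘L F₀) := by simp [ContinuousLinearMap.comp_assoc]
        _ = P ∘L F₀ := by rw [hP2, show E₀ ∘L F₀ = F₀ from hF₀E₀]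
    have hsub : P ∘L E₀ - P ∘L F₀ = P ∘L A := by
      rw [hAdef]; exact (ContinuousLinearMap.comp_sub P E₀ F₀).symm
    have hcPA : P ∘L A = A ∘L P := by
      rw [hAdef, ContinuousLinearMap.comp_sub, ContinuousLinearMap.sub_comp, hcPE, hcPF]
    have hPAle : pLE (P ∘L E₀ - P ∘L F₀) A := by
      rw [hsub]
      show A ∘L (P ∘L A) = P ∘L A
      calc A ∘L (P ∘L A) = (A ∘L A) ∘L P := by
            rw [hcPA, ← ContinuousLinearMap.comp_assoc]
        _ = P ∘L A := by rw [hA2, ← hcPA]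
    rcases hAtom (P ∘L E₀) hE' (P ∘L F₀) hF' hle hPAle with h | h
    · left; rw [← hsub]; exact h
    · right; rw [← hsub]; exact h
  have hTapp : ∀ z : H, T z = (((‖x‖ : ℂ) ^ 2)⁻¹) • (⟪x, z⟫_ℂ • y) := by
    intro z; rw [hT]; rfl
  refine ⟨?_, ?_, ?_⟩
  · intro P hPL
    obtain ⟨hPs, hP2⟩ := hproj P hPL
    rcases dich P hPL with h | h
    · -- P x = 0
      have hPx : P x = 0 := by
        have h1 : (P ∘L A) x = 0 := by rw [h]; rfl
        simpa [hx] using h1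
      ext z
      simp only [ContinuousLinearMap.comp_apply, hTapp]
      have hip : ⟪x, P z⟫_ℂ = 0 := by
        rw [← ContinuousLinearMap.adjoint_inner_left, hPs.adjoint_eq, hPx, inner_zero_left]
      rw [hip]
      simp
    · -- A ≤ P, so E ≤ P, so P y = y
      have hEP : P ∘L E = E := hEmin P hPL h
      have hPy : P y = y := by
        have h1 : (P ∘L E) y = E y := by rw [hEP]
        simpa [hy] using h1
      ext z
      simp only [ContinuousLinearMap.comp_apply, hTapp, ContinuousLinearMap.sub_apply,
        ContinuousLinearMap.one_apply, ContinuousLinearMap.zero_apply]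
      rw [map_smul, map_smul, hPy]
      simp
  · rw [hTapp]
    have hin : ⟪x, x⟫_ℂ = (‖x‖ : ℂ) ^ 2 := by
      rw [inner_self_eq_norm_sq_to_K]; norm_cast
    have hn : (‖x‖ : ℂ) ^ 2 ≠ 0 :=
      pow_ne_zero 2 (by exact_mod_cast norm_ne_zero_iff.mpr hx0)
    rw [hin, smul_smul, inv_mul_cancel₀ hn, one_smul]
  · ext z
    simp only [ContinuousLinearMap.comp_apply, hTapp]
    have hadj : ⟪x, A z⟫_ℂ = ⟪x, z⟫_ℂ := by
      rw [← ContinuousLinearMap.adjoint_inner_left, hAs.adjoint_eq, hx]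
    rw [hadj]
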